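/- Let Y be a measurable space, E ⊆ ℝ, and let H, L : E → (probability measures on Y) be two families such that for all e, e' ∈ E with e ≤ e' there exists a single Markov kernel κ from Y to Y with H(e) = H(e').bind κ and L(e) = L(e').bind κ (higher effort is Blackwell more informative). Fix α ∈ [0,1] and define, for (e₁, e₂) ∈ E × E, Φ(e₁, e₂) := sup{ ∫ ψ d(H(e₁) ⊗ H(e₂)) : ψ : Y × Y → [0,1] measurable, ∫ ψ d(L(e₁) ⊗ L(e₂)) ≤ α }, the maximal power at level α for testing the null 'both independent outputs are drawn from the L-family' against the alternative 'both are drawn from the H-family'. Then Φ is nondecreasing in e₁ and nondecreasing in e₂. -/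

import Mathlib

open MeasureTheory ProbabilityTheory
open scoped ENNReal

/-- The maximal power at level `α` for testing the null `P₀` against the alternative `P₁`:
the supremum of powers of randomized tests of size at most `α`. -/
noncomputable def maxPower {Y : Type*} [MeasurableSpace Y] (P₀ P₁ : Measure Y) (α : ℝ) : ℝ :=
  sSup {r : ℝ | ∃ ψ : Y → ℝ, Measurable ψ ∧ (∀ y, 0 ≤ ψ y) ∧ (∀ y, ψ y ≤ 1) ∧
    (∫ y, ψ y ∂P₀) ≤ α ∧ r = ∫ y, ψ y ∂P₁}

section Aux

variable {Y : Type*} [MeasurableSpace Y]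

lemma integrable_of_bounds {m : Measure Y} [IsFiniteMeasure m] {f : Y → ℝ}
    (hf : Measurable f) (h0 : ∀ y, 0 ≤ f y) (h1 : ∀ y, f y ≤ 1) : Integrable f m :=
  (integrable_const (1 : ℝ)).mono' hf.aestronglyMeasurable
    (Filter.Eventually.of_forall fun y => by
      rw [Real.norm_eq_abs, abs_of_nonneg (h0 y)]; exact h1 y)

/-- The key identity: the power of the garbled test equals the power of the original test
against the garbled experiment, in the first coordinate of a product. -/
lemma crux_integral (μ ν : Measure Y) [IsProbabilityMeasure μ] [IsProbabilityMeasure ν]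
    (κ : Kernel Y Y) [IsMarkovKernel κ] (ψ : Y × Y → ℝ) (hψ : Measurable ψ)
    (h0 : ∀ p, 0 ≤ ψ p) (h1 : ∀ p, ψ p ≤ 1) :
    ∫ p, (∫ z, ψ (z, p.2) ∂(κ p.1)) ∂(μ.prod ν)
      = ∫ p, ψ p ∂((μ.bind (fun y => κ y)).prod ν) := by
  set F : Y × Y → ℝ≥0∞ := fun p => ENNReal.ofReal (ψ p) with hF
  have hFm : Measurable F := hψ.ennreal_ofReal
  set ψ' : Y × Y → ℝ := fun p => ∫ z, ψ (z, p.2) ∂(κ p.1) with hψ'def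
  -- measurability of ψ'
  have hψ'm : Measurable ψ' := by
    have hSM : StronglyMeasurable fun q : (Y × Y) × Y => ψ (q.2, q.1.2) :=
      (hψ.comp (measurable_snd.prodMk (measurable_snd.comp measurable_fst))).stronglyMeasurable
    have := hSM.integral_kernel_prod_right' (κ := κ.comap Prod.fst measurable_fst)
    simpa [Kernel.comap_apply] using this.measurable
  -- integrability of slices
  have hint : ∀ p : Y × Y, Integrable (fun z => ψ (z, p.2)) (κ p.1) := fun p =>
    integrable_of_bounds (hψ.comp (measurable_id.prodMk measurable_const))
      (fun z => h0 _) (fun z => h1 _)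
  have hψ'0 : ∀ p, 0 ≤ ψ' p := fun p => integral_nonneg fun z => h0 _
  -- pointwise: ofReal (ψ' p) = ∫⁻ z, F (z, p.2) ∂ κ p.1
  have hpt : ∀ p : Y × Y, ENNReal.ofReal (ψ' p) = ∫⁻ z, F (z, p.2) ∂(κ p.1) := fun p =>
    ofReal_integral_eq_lintegral_ofReal (hint p) (Filter.Eventually.of_forall fun z => h0 _)
  -- rewrite both Bochner integrals as lintegrals
  have hLHS : ∫ p, ψ' p ∂(μ.prod ν)
      = (∫⁻ p, ∫⁻ z, F (z, p.2) ∂(κ p.1) ∂(μ.prod ν)).toReal := by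
    rw [integral_eq_lintegral_of_nonneg_ae (Filter.Eventually.of_forall hψ'0)
      hψ'm.aestronglyMeasurable]
    congr 1
    exact lintegral_congr fun p => hpt p
  have hRHS : ∫ p, ψ p ∂((μ.bind (fun y => κ y)).prod ν)
      = (∫⁻ p, F p ∂((μ.bind (fun y => κ y)).prod ν)).toReal := by
    rw [integral_eq_lintegral_of_nonneg_ae (Filter.Eventually.of_forall h0)
      hψ.aestronglyMeasurable]
  rw [hLHS, hRHS]
  congr 1
  -- now a pure lintegral computation
  have hG : Measurable fun z => ∫⁻ y₂, F (z, y₂) ∂ν := hFm.lintegral_prod_right'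
  have hbind : IsProbabilityMeasure (μ.bind (fun y => κ y)) := by
    constructor
    rw [Measure.bind_apply MeasurableSet.univ κ.measurable.aemeasurable]
    simp
  have hmeasK : Measurable fun p : Y × Y => ∫⁻ z, F (z, p.2) ∂(κ p.1) := by
    have : Measurable fun q : (Y × Y) × Y => F (q.2, q.1.2) :=
      hFm.comp (measurable_snd.prodMk (measurable_snd.comp measurable_fst))
    have := this.lintegral_kernel_prod_right' (κ := κ.comap Prod.fst measurable_fst)
    simpa [Kernel.comap_apply] using this
  calc ∫⁻ p, ∫⁻ z, F (z, p.2) ∂(κ p.1) ∂(μ.prod ν)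
      = ∫⁻ y₁, ∫⁻ y₂, ∫⁻ z, F (z, y₂) ∂(κ y₁) ∂ν ∂μ :=
        lintegral_prod _ hmeasK.aemeasurable
    _ = ∫⁻ y₁, ∫⁻ z, ∫⁻ y₂, F (z, y₂) ∂ν ∂(κ y₁) ∂μ := by
        refine lintegral_congr fun y₁ => ?_
        exact lintegral_lintegral_swap (f := fun y₂ z => F (z, y₂))
          ((hFm.comp measurable_swap).aemeasurable)
    _ = ∫⁻ z, ∫⁻ y₂, F (z, y₂) ∂ν ∂(μ.bind (fun y => κ y)) := by
        rw [MeasureTheory.Measure.lintegral_bind κ.measurable.aemeasurable hG.aemeasurable]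
    _ = ∫⁻ p, F p ∂((μ.bind (fun y => κ y)).prod ν) :=
        (lintegral_prod _ hFm.aemeasurable).symm

/-- Monotonicity of maximal power under garbling in the first coordinate. -/
lemma maxPower_mono_first (L₁ L₁' L₂ H₁ H₁' H₂ : Measure Y)
    [IsProbabilityMeasure L₁'] [IsProbabilityMeasure L₂]
    [IsProbabilityMeasure H₁'] [IsProbabilityMeasure H₂]
    (κ : Kernel Y Y) [IsMarkovKernel κ]
    (hH : H₁ = H₁'.bind (fun y => κ y)) (hL : L₁ = L₁'.bind (fun y => κ y))
    (α : ℝ) (hα : 0 ≤ α) :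
    maxPower (L₁.prod L₂) (H₁.prod H₂) α ≤ maxPower (L₁'.prod L₂) (H₁'.prod H₂) α := by
  unfold maxPower
  apply csSup_le_csSup
  · -- bounded above by 1
    refine ⟨1, ?_⟩
    rintro r ⟨ψ, hm, h0, h1, -, rfl⟩
    calc ∫ p, ψ p ∂(H₁'.prod H₂) ≤ ∫ _, (1 : ℝ) ∂(H₁'.prod H₂) :=
          integral_mono (integrable_of_bounds hm h0 h1) (integrable_const 1) h1
      _ = 1 := by simp
  · -- nonempty
    exact ⟨0, fun _ => 0, measurable_const, fun _ => le_refl 0, fun _ => zero_le_one,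
      by simpa using hα, by simp⟩
  · -- inclusion of test sets
    rintro r ⟨ψ, hm, h0, h1, hsize, rfl⟩
    refine ⟨fun p => ∫ z, ψ (z, p.2) ∂(κ p.1), ?_, ?_, ?_, ?_, ?_⟩
    · have hSM : StronglyMeasurable fun q : (Y × Y) × Y => ψ (q.2, q.1.2) :=
        (hm.comp (measurable_snd.prodMk (measurable_snd.comp measurable_fst))).stronglyMeasurable
      have := hSM.integral_kernel_prod_right' (κ := κ.comap Prod.fst measurable_fst)
      simpa [Kernel.comap_apply] using this.measurable
    · exact fun p => integral_nonneg fun z => h0 _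
    · intro p
      calc ∫ z, ψ (z, p.2) ∂(κ p.1) ≤ ∫ _, (1 : ℝ) ∂(κ p.1) :=
            integral_mono
              (integrable_of_bounds (hm.comp (measurable_id.prodMk measurable_const))
                (fun z => h0 _) (fun z => h1 _))
              (integrable_const 1) (fun z => h1 _)
        _ = 1 := by simp
    · rw [crux_integral L₁' L₂ κ ψ hm h0 h1, ← hL]; exact hsize
    · rw [crux_integral H₁' H₂ κ ψ hm h0 h1, ← hH]

/-- Maximal power is invariant under swapping the two coordinates of a product experiment. -/
lemma maxPower_swap (μ ν μ' ν' : Measure Y) [SFinite μ] [SFinite ν] [SFinite μ'] [SFinite ν']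
    (α : ℝ) :
    maxPower (μ.prod ν) (μ'.prod ν') α = maxPower (ν.prod μ) (ν'.prod μ') α := by
  unfold maxPower
  congr 1
  ext r
  constructor
  all_goals
    rintro ⟨ψ, hm, h0, h1, hsize, rfl⟩
    refine ⟨fun p => ψ p.swap, hm.comp measurable_swap, fun p => h0 _, fun p => h1 _, ?_, ?_⟩
  · calc ∫ p, ψ p.swap ∂(ν.prod μ) = ∫ p, ψ p ∂((ν.prod μ).map Prod.swap) :=
          (integral_map measurable_swap.aemeasurable hm.aestronglyMeasurable).symm
      _ = ∫ p, ψ p ∂(μ.prod ν) := by rw [Measure.prod_swap]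
    · exact hsize
  · calc ∫ p, ψ p ∂(μ'.prod ν') = ∫ p, ψ p ∂((ν'.prod μ').map Prod.swap) := by
          rw [Measure.prod_swap]
      _ = ∫ p, ψ p.swap ∂(ν'.prod μ') :=
          integral_map measurable_swap.aemeasurable hm.aestronglyMeasurable
  · calc ∫ p, ψ p.swap ∂(μ.prod ν) = ∫ p, ψ p ∂((μ.prod ν).map Prod.swap) :=
          (integral_map measurable_swap.aemeasurable hm.aestronglyMeasurable).symm
      _ = ∫ p, ψ p ∂(ν.prod μ) := by rw [Measure.prod_swap]
    · exact hsize
  · calc ∫ p, ψ p ∂(ν'.prod μ') = ∫ p, ψ p ∂((μ'.prod ν').map Prod.swap) := by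
          rw [Measure.prod_swap]
      _ = ∫ p, ψ p.swap ∂(μ'.prod ν') :=
          integral_map measurable_swap.aemeasurable hm.aestronglyMeasurable

end Aux

/-- Lemma 1 of the paper: if higher effort is Blackwell more informative (the
experiment `(H e, L e)` is a garbling, via a single Markov kernel, of `(H e', L e')` whenever
`e ≤ e'` in `E`), then the maximal power at level `α` of the two-player product experiment
(null: both outputs drawn from `L`, alternative: both drawn from `H`) is nondecreasing in each
player's effort. -/
theorem maxPower_prod_monotone_in_effort
    {Y : Type*} [MeasurableSpace Y] (E : Set ℝ) (H L : ℝ → Measure Y)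
    (hH : ∀ e ∈ E, IsProbabilityMeasure (H e)) (hL : ∀ e ∈ E, IsProbabilityMeasure (L e))
    (hinfo : ∀ e ∈ E, ∀ e' ∈ E, e ≤ e' →
      ∃ κ : Kernel Y Y, IsMarkovKernel κ ∧
        H e = (H e').bind (fun y => κ y) ∧ L e = (L e').bind (fun y => κ y))
    (α : ℝ) (hα : α ∈ Set.Icc (0 : ℝ) 1)
    (Φ : ℝ → ℝ → ℝ)
    (hΦ : ∀ e₁ e₂, Φ e₁ e₂ = maxPower ((L e₁).prod (L e₂)) ((H e₁).prod (H e₂)) α) :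
    (∀ e₁ ∈ E, ∀ e₁' ∈ E, ∀ e₂ ∈ E, e₁ ≤ e₁' → Φ e₁ e₂ ≤ Φ e₁' e₂) ∧
    (∀ e₁ ∈ E, ∀ e₂ ∈ E, ∀ e₂' ∈ E, e₂ ≤ e₂' → Φ e₁ e₂ ≤ Φ e₁ e₂') := by
  constructor
  · intro e₁ he₁ e₁' he₁' e₂ he₂ hle
    obtain ⟨κ, hκ, hHb, hLb⟩ := hinfo e₁ he₁ e₁' he₁' hle
    haveI := hH e₁' he₁'; haveI := hL e₁' he₁'
    haveI := hH e₂ he₂; haveI := hL e₂ he₂; haveI := hκ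
    rw [hΦ, hΦ]
    exact maxPower_mono_first (L e₁) (L e₁') (L e₂) (H e₁) (H e₁') (H e₂) κ hHb hLb α hα.1
  · intro e₁ he₁ e₂ he₂ e₂' he₂' hle
    obtain ⟨κ, hκ, hHb, hLb⟩ := hinfo e₂ he₂ e₂' he₂' hle
    haveI := hH e₁ he₁; haveI := hL e₁ he₁
    haveI := hH e₂ he₂; haveI := hL e₂ he₂
    haveI := hH e₂' he₂'; haveI := hL e₂' he₂'; haveI := hκ
    rw [hΦ, hΦ,
      maxPower_swap (L e₁) (L e₂) (H e₁) (H e₂) α,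
      maxPower_swap (L e₁) (L e₂') (H e₁) (H e₂') α]
    exact maxPower_mono_first (L e₂) (L e₂') (L e₁) (H e₂) (H e₂') (H e₁) κ hHb hLb α hα.1
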